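/- Let k be a commutative ring in which 2 is invertible, V = k² with standard basis e1, e2, and B a bilinear form on V with matrix (b_{ij}). Let ∘_B denote the Clifford product on ⋀V associated to B. Then the grade involution α of ⋀V satisfies the antipode equation for the Clifford convolution — that is, Σ α(x₍₁₎) ∘_B x₍₂₎ = ε(x)·1 for all x ∈ ⋀V, where Δ(x) = Σ x₍₁₎ ⊗ x₍₂₎ is the Grassmann coproduct — if and only if B is symmetric, i.e., b₁₂ = b₂₁. -/

import Mathlib

open scoped TensorProduct

/-- The cliffordized (Rota–Stein) product on the exterior algebra `⋀V` associated to a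
bilinear form `B` on `V`, as a linear map `⋀V ⊗ ⋀V →ₗ ⋀V`: the multiplication of the
Clifford algebra of the quadratic form `x ↦ B x x` transported back to `⋀V` along
Chevalley's linear isomorphism (`changeFormEquiv`) determined by `B`. -/
noncomputable def cliffordMul {k : Type*} [CommRing k]
    (B : LinearMap.BilinForm k (Fin 2 → k)) :
    ExteriorAlgebra k (Fin 2 → k) ⊗[k] ExteriorAlgebra k (Fin 2 → k) →ₗ[k]
      ExteriorAlgebra k (Fin 2 → k) :=
  letI e : ExteriorAlgebra k (Fin 2 → k) ≃ₗ[k] CliffordAlgebra B.toQuadraticMap :=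
    CliffordAlgebra.changeFormEquiv (Q := (0 : QuadraticForm k (Fin 2 → k)))
      (Q' := B.toQuadraticMap) (B := B) (sub_zero B.toQuadraticMap).symm
  e.symm.toLinearMap ∘ₗ LinearMap.mul' k (CliffordAlgebra B.toQuadraticMap) ∘ₗ
    TensorProduct.map e.toLinearMap e.toLinearMap

section Aux

variable {k : Type*} [CommRing k] (B : LinearMap.BilinForm k (Fin 2 → k))

/-- Chevalley's isomorphism used in `cliffordMul`. -/
noncomputable def chevalleyE :
    ExteriorAlgebra k (Fin 2 → k) ≃ₗ[k] CliffordAlgebra B.toQuadraticMap :=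
  CliffordAlgebra.changeFormEquiv (Q := (0 : QuadraticForm k (Fin 2 → k)))
    (Q' := B.toQuadraticMap) (B := B) (sub_zero B.toQuadraticMap).symm

theorem cm_tmul (a b : ExteriorAlgebra k (Fin 2 → k)) :
    cliffordMul B (a ⊗ₜ[k] b) = (chevalleyE B).symm (chevalleyE B a * chevalleyE B b) := by
  simp [cliffordMul, chevalleyE]

theorem chevalleyE_one : chevalleyE B 1 = 1 :=
  CliffordAlgebra.changeForm_one (sub_zero B.toQuadraticMap).symm

theorem chevalleyE_ι (v : Fin 2 → k) :
    chevalleyE B (ExteriorAlgebra.ι k v) = CliffordAlgebra.ι B.toQuadraticMap v :=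
  CliffordAlgebra.changeForm_ι (sub_zero B.toQuadraticMap).symm v

theorem cm_one_left (b : ExteriorAlgebra k (Fin 2 → k)) :
    cliffordMul B (1 ⊗ₜ[k] b) = b := by
  rw [cm_tmul, chevalleyE_one, one_mul, LinearEquiv.symm_apply_apply]

theorem cm_one_right (a : ExteriorAlgebra k (Fin 2 → k)) :
    cliffordMul B (a ⊗ₜ[k] 1) = a := by
  rw [cm_tmul, chevalleyE_one, mul_one, LinearEquiv.symm_apply_apply]

theorem cm_ι_ι (v w : Fin 2 → k) :
    cliffordMul B (ExteriorAlgebra.ι k v ⊗ₜ[k] ExteriorAlgebra.ι k w) =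
      ExteriorAlgebra.ι k v * ExteriorAlgebra.ι k w + algebraMap k _ (B v w) := by
  have h : chevalleyE B
        (ExteriorAlgebra.ι k v * ExteriorAlgebra.ι k w + algebraMap k _ (B v w))
      = CliffordAlgebra.ι B.toQuadraticMap v * CliffordAlgebra.ι B.toQuadraticMap w := by
    simp only [map_add, chevalleyE, CliffordAlgebra.changeFormEquiv_apply]
    rw [CliffordAlgebra.changeForm_ι_mul_ι, CliffordAlgebra.changeForm_algebraMap]
    exact sub_add_cancel _ _
  rw [cm_tmul, chevalleyE_ι, chevalleyE_ι, ← h, LinearEquiv.symm_apply_apply]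

theorem aux_mem_span (e1 e2 : Fin 2 → k) (he1 : e1 = Pi.single 0 1)
    (he2 : e2 = Pi.single 1 1) (x : ExteriorAlgebra k (Fin 2 → k)) :
    x ∈ Submodule.span k {1, ExteriorAlgebra.ι k e1, ExteriorAlgebra.ι k e2,
      ExteriorAlgebra.ι k e1 * ExteriorAlgebra.ι k e2} := by
  set x1 := ExteriorAlgebra.ι k e1 with hx1
  set x2 := ExteriorAlgebra.ι k e2 with hx2
  set S := Submodule.span k {(1 : ExteriorAlgebra k (Fin 2 → k)), x1, x2, x1 * x2} with hS
  have hm1 : (1 : ExteriorAlgebra k (Fin 2 → k)) ∈ S := Submodule.subset_span (by simp)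
  have hmx1 : x1 ∈ S := Submodule.subset_span (by simp)
  have hmx2 : x2 ∈ S := Submodule.subset_span (by simp)
  have hmx12 : x1 * x2 ∈ S := Submodule.subset_span (by simp)
  have h0 : ∀ u : Fin 2 → k, ExteriorAlgebra.ι k u * ExteriorAlgebra.ι k u = 0 :=
    fun u => ExteriorAlgebra.ι_sq_zero u
  have hswap : x2 * x1 = -(x1 * x2) :=
    eq_neg_of_add_eq_zero_left (by rw [hx1, hx2]; exact ExteriorAlgebra.ι_add_mul_swap e2 e1)
  have p112 : x1 * (x1 * x2) = 0 := by rw [← mul_assoc, h0, zero_mul]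
  have p212 : x2 * (x1 * x2) = 0 := by
    rw [← mul_assoc, hswap, neg_mul, mul_assoc, h0, mul_zero, neg_zero]
  have p121 : (x1 * x2) * x1 = 0 := by
    rw [mul_assoc, hswap, mul_neg, p112, neg_zero]
  have p122 : (x1 * x2) * x2 = 0 := by rw [mul_assoc, h0, mul_zero]
  have p1212 : (x1 * x2) * (x1 * x2) = 0 := by rw [← mul_assoc, p121, zero_mul]
  -- S is closed under multiplication
  have hmul : ∀ a ∈ S, ∀ b ∈ S, a * b ∈ S := by
    intro a ha b hb
    induction ha using Submodule.span_induction with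
    | zero => rw [zero_mul]; exact S.zero_mem
    | add u v _ _ hu hv => rw [add_mul]; exact S.add_mem hu hv
    | smul c u _ hu => rw [smul_mul_assoc]; exact S.smul_mem c hu
    | mem u hu =>
      induction hb using Submodule.span_induction with
      | zero => rw [mul_zero]; exact S.zero_mem
      | add w v _ _ hw hv => rw [mul_add]; exact S.add_mem hw hv
      | smul c w _ hw => rw [mul_smul_comm]; exact S.smul_mem c hw
      | mem w hw =>
        simp only [Set.mem_insert_iff, Set.mem_singleton_iff] at hu hw
        rcases hu with rfl | rfl | rfl | rfl <;> rcases hw with rfl | rfl | rfl | rfl <;>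
          try simp only [one_mul, mul_one, h0, hswap, p112, p212, p121, p122, p1212]
        · exact hm1
        · exact hmx1
        · exact hmx2
        · exact hmx12
        · exact hmx1
        · rw [hx1, h0]; exact S.zero_mem
        · exact hmx12
        · exact S.zero_mem
        · exact hmx2
        · exact S.neg_mem hmx12
        · rw [hx2, h0]; exact S.zero_mem
        · exact S.zero_mem
        · exact hmx12
        · exact S.zero_mem
        · exact S.zero_mem
        · exact S.zero_mem
  have hι : ∀ v : Fin 2 → k, ExteriorAlgebra.ι k v ∈ S := by
    intro v
    have hv : v = v 0 • e1 + v 1 • e2 := by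
      rw [he1, he2]; funext i; fin_cases i <;> simp
    rw [hv, map_add, map_smul, map_smul]
    exact S.add_mem (S.smul_mem _ hmx1) (S.smul_mem _ hmx2)
  induction x using CliffordAlgebra.induction with
  | algebraMap r =>
    rw [Algebra.algebraMap_eq_smul_one]
    exact S.smul_mem r hm1
  | ι v => exact hι v
  | mul a b ha hb => exact hmul a ha b hb
  | add a b ha hb => exact S.add_mem ha hb

end Aux

set_option maxHeartbeats 1000000 in
theorem grade_involution_clifford_antipode_iff_symmetric
    (k : Type*) [CommRing k] [Invertible (2 : k)]
    (e1 e2 : Fin 2 → k) (he1 : e1 = Pi.single 0 1) (he2 : e2 = Pi.single 1 1)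
    (B : LinearMap.BilinForm k (Fin 2 → k))
    (Δ : ExteriorAlgebra k (Fin 2 → k) →ₗ[k]
          ExteriorAlgebra k (Fin 2 → k) ⊗[k] ExteriorAlgebra k (Fin 2 → k))
    (hΔ1 : Δ 1 = 1 ⊗ₜ[k] 1)
    (hΔe1 : Δ (ExteriorAlgebra.ι k e1) =
      ExteriorAlgebra.ι k e1 ⊗ₜ[k] 1 + 1 ⊗ₜ[k] ExteriorAlgebra.ι k e1)
    (hΔe2 : Δ (ExteriorAlgebra.ι k e2) =
      ExteriorAlgebra.ι k e2 ⊗ₜ[k] 1 + 1 ⊗ₜ[k] ExteriorAlgebra.ι k e2)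
    (hΔ12 : Δ (ExteriorAlgebra.ι k e1 * ExteriorAlgebra.ι k e2) =
      1 ⊗ₜ[k] (ExteriorAlgebra.ι k e1 * ExteriorAlgebra.ι k e2)
      + ExteriorAlgebra.ι k e1 ⊗ₜ[k] ExteriorAlgebra.ι k e2
      - ExteriorAlgebra.ι k e2 ⊗ₜ[k] ExteriorAlgebra.ι k e1
      + (ExteriorAlgebra.ι k e1 * ExteriorAlgebra.ι k e2) ⊗ₜ[k] 1) :
    (∀ x : ExteriorAlgebra k (Fin 2 → k),
        cliffordMul B
          (TensorProduct.map
            (CliffordAlgebra.involute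
              (Q := (0 : QuadraticForm k (Fin 2 → k)))).toLinearMap
            LinearMap.id (Δ x))
        = algebraMap k (ExteriorAlgebra k (Fin 2 → k))
            (ExteriorAlgebra.algebraMapInv x))
      ↔ B e1 e2 = B e2 e1 := by
  set x1 := ExteriorAlgebra.ι k e1 with hx1
  set x2 := ExteriorAlgebra.ι k e2 with hx2
  have hinv_ι : ∀ v : Fin 2 → k,
      ExteriorAlgebra.algebraMapInv (ExteriorAlgebra.ι k v) = (0 : k) := by
    intro v; simp [ExteriorAlgebra.algebraMapInv]
  have hinvol_ι : ∀ v : Fin 2 → k,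
      (CliffordAlgebra.involute (Q := (0 : QuadraticForm k (Fin 2 → k))))
        (ExteriorAlgebra.ι k v) = -ExteriorAlgebra.ι k v := fun v =>
    CliffordAlgebra.involute_ι v
  have hswap : x2 * x1 = -(x1 * x2) :=
    eq_neg_of_add_eq_zero_left (by rw [hx1, hx2]; exact ExteriorAlgebra.ι_add_mul_swap e2 e1)
  have hinv1 : ExteriorAlgebra.algebraMapInv x1 = (0 : k) := hinv_ι e1
  have hinv2 : ExteriorAlgebra.algebraMapInv x2 = (0 : k) := hinv_ι e2
  have hinv12 : ExteriorAlgebra.algebraMapInv (x1 * x2) = (0 : k) := by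
    rw [map_mul, hinv1, hinv2, mul_zero]
  -- value of the LHS on the top generator
  have key : cliffordMul B
      (TensorProduct.map
        (CliffordAlgebra.involute (Q := (0 : QuadraticForm k (Fin 2 → k)))).toLinearMap
        LinearMap.id (Δ (x1 * x2)))
      = algebraMap k (ExteriorAlgebra k (Fin 2 → k)) (B e2 e1 - B e1 e2) := by
    rw [hΔ12]
    simp only [map_add, map_sub]
    simp only [TensorProduct.map_tmul, AlgHom.toLinearMap_apply, LinearMap.id_apply,
      map_one, hx1, hx2, hinvol_ι, map_mul, neg_mul_neg, TensorProduct.neg_tmul, map_neg]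
    rw [cm_one_left, cm_one_right, ← hx1, ← hx2, cm_ι_ι, cm_ι_ι, ← hx1, ← hx2, hswap]
    abel
  constructor
  · intro h
    have h12 := (key.symm.trans (h (x1 * x2))).symm
    rw [hinv12, map_zero] at h12
    have h0 : B e2 e1 - B e1 e2 = 0 := by
      rwa [eq_comm, ExteriorAlgebra.algebraMap_eq_zero_iff] at h12
    exact (sub_eq_zero.mp h0).symm
  · intro hsym x
    have hx := aux_mem_span e1 e2 he1 he2 x
    rw [← hx1, ← hx2] at hx
    induction hx using Submodule.span_induction with
    | zero => simp
    | add u v _ _ hu hv =>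
      rw [map_add, map_add, map_add, map_add, hu, hv,
        ← map_add (algebraMap k (ExteriorAlgebra k (Fin 2 → k)))]
    | smul c u _ hu =>
      rw [map_smul, map_smul, map_smul, map_smul, hu, smul_eq_mul, map_mul,
        ← Algebra.smul_def]
    | mem u hu =>
      simp only [Set.mem_insert_iff, Set.mem_singleton_iff] at hu
      rcases hu with rfl | rfl | rfl | rfl
      · rw [hΔ1]
        simp only [TensorProduct.map_tmul, AlgHom.toLinearMap_apply, map_one,
          LinearMap.id_apply, cm_one_left]
      · rw [hΔe1, map_add]
        simp only [TensorProduct.map_tmul, AlgHom.toLinearMap_apply, map_one,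
          LinearMap.id_apply, hx1, hinvol_ι]
        rw [TensorProduct.neg_tmul, map_add, map_neg, cm_one_right, cm_one_left, ← hx1,
          neg_add_cancel, hinv1, map_zero]
      · rw [hΔe2, map_add]
        simp only [TensorProduct.map_tmul, AlgHom.toLinearMap_apply, map_one,
          LinearMap.id_apply, hx2, hinvol_ι]
        rw [TensorProduct.neg_tmul, map_add, map_neg, cm_one_right, cm_one_left, ← hx2,
          neg_add_cancel, hinv2, map_zero]
      · rw [key, hinv12, map_zero, hsym, sub_self, map_zero]
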